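/- Let G be a simple graph such that every non-adjacent pair (u,v) of vertices is a diagonal of at most k obstructions, and suppose there exists a set F of at most k non-edges of G such that G + F is (P₄, C₄)-free. Then the set X(G) of vertices of G belonging to at least one induced P₄ or C₄ has at most 2k² + 2k elements. -/

import Mathlib

open SimpleGraph

/-- `u-a-v-b` induces a `P₄` or a `C₄` (the edge `ub` is unconstrained): the four vertices
are pairwise distinct, `ua`, `av`, `vb` are edges, and `uv`, `ab` are non-edges. The pair
`(u, v)` is then a diagonal of this obstruction. -/
def PathObstruction {V : Type*} (G : SimpleGraph V) (u a v b : V) : Prop :=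
  u ≠ v ∧ a ≠ b ∧ u ≠ b ∧
  G.Adj u a ∧ G.Adj a v ∧ G.Adj v b ∧ ¬ G.Adj u v ∧ ¬ G.Adj a b

namespace ModAux

variable {V : Type*}

def pts (G : SimpleGraph V) (u v : V) : Set V :=
  {x | ∃ a b, PathObstruction G u a v b ∧ (x = a ∨ x = b)}

def Fend (F : Set (Sym2 V)) : Set V := {x | ∃ y, s(x, y) ∈ F}

lemma flip {G : SimpleGraph V} {u a v b : V} (h : PathObstruction G u a v b) :
    PathObstruction G b v a u := by
  obtain ⟨huv, hab, hub, h1, h2, h3, h4, h5⟩ := h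
  exact ⟨fun h => hab h.symm, fun h => huv h.symm, fun h => hub h.symm,
    h3.symm, h2.symm, h1.symm, fun h => h5 h.symm, fun h => h4 h.symm⟩

lemma adj_sup_iff {G : SimpleGraph V} {F : Set (Sym2 V)} {p q : V} :
    (G ⊔ fromEdgeSet F).Adj p q ↔ G.Adj p q ∨ (s(p, q) ∈ F ∧ p ≠ q) := by
  simp [fromEdgeSet_adj]

lemma persist {G : SimpleGraph V} {F : Set (Sym2 V)}
    (hfree : ∀ x y z t : V, ¬ PathObstruction (G ⊔ fromEdgeSet F) x y z t)
    {u a v b : V} (h : PathObstruction G u a v b) :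
    s(u, v) ∈ F ∨ s(a, b) ∈ F := by
  by_contra hc
  push_neg at hc
  obtain ⟨huv, hab, hub, h1, h2, h3, h4, h5⟩ := h
  exact hfree u a v b ⟨huv, hab, hub, adj_sup_iff.mpr (Or.inl h1),
    adj_sup_iff.mpr (Or.inl h2), adj_sup_iff.mpr (Or.inl h3),
    fun hadj => (adj_sup_iff.mp hadj).elim h4 (fun hh => hc.1 hh.1),
    fun hadj => (adj_sup_iff.mp hadj).elim h5 (fun hh => hc.2 hh.1)⟩

/-- classification of a vertex in `pts v u` that is not in `pts u v` -/
lemma side {G : SimpleGraph V} {u v z : V} (huv : ¬ G.Adj u v)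
    (hz : z ∈ pts G v u) (hz' : z ∉ pts G u v) :
    (G.Adj u z ∧ ¬ G.Adj v z) ∨
    (G.Adj u z ∧ G.Adj v z ∧ ∃ c, G.Adj u c ∧ ¬ G.Adj v c ∧ ¬ G.Adj z c ∧ z ≠ c) := by
  obtain ⟨a, b, hPO, hzab⟩ := hz
  obtain ⟨hvu, hab, hvb, h1, h2, h3, h4, h5⟩ := hPO
  -- h1 : Adj v a, h2 : Adj a u, h3 : Adj u b, h4 : ¬Adj v u, h5 : ¬Adj a b
  have hGuv : u ≠ v := fun h => hvu h.symm
  rcases hzab with rfl | rfl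
  · -- z = a : middle of the obstruction
    right
    refine ⟨h2.symm, h1, b, h3, ?_, h5, hab⟩
    intro hvb'
    exact hz' ⟨b, z, ⟨hGuv, Ne.symm hab, Ne.symm h2.ne, h3, hvb'.symm, h1, huv,
      fun h => h5 h.symm⟩, Or.inr rfl⟩
  · -- z = b : tip of the obstruction
    left
    refine ⟨h3, ?_⟩
    intro hvz
    exact hz' ⟨z, a, ⟨hGuv, Ne.symm hab, Ne.symm h2.ne, h3, hvz.symm, h1, huv,
      fun h => h5 h.symm⟩, Or.inl rfl⟩

/-- domination: a common neighbour of `u,v` not in `pts u v` is adjacent to all of `N(v)` -/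
lemma dom {G : SimpleGraph V} {u v z : V} (huv : ¬ G.Adj u v) (hne : u ≠ v)
    (hu : G.Adj u z) (hv : G.Adj v z) (hz' : z ∉ pts G u v) :
    ∀ w, G.Adj v w → w ≠ z → G.Adj z w := by
  intro w hw hwz
  by_contra hzw
  exact hz' ⟨z, w, ⟨hne, Ne.symm hwz, fun h => huv (h ▸ hw).symm, hu, hv.symm, hw, huv, hzw⟩,
    Or.inl rfl⟩


lemma noCross {G : SimpleGraph V} {F : Set (Sym2 V)} (hF : F ⊆ Gᶜ.edgeSet)
    (hfree : ∀ x y z t : V, ¬ PathObstruction (G ⊔ fromEdgeSet F) x y z t)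
    {u v : V} (he : s(u, v) ∈ F) {x y : V}
    (hx : x ∈ pts G v u) (hx1 : x ∉ pts G u v) (hx2 : x ∉ Fend F)
    (hy : y ∈ pts G u v) (hy1 : y ∉ pts G v u) (hy2 : y ∉ Fend F) : False := by
  have hcompl : Gᶜ.Adj u v := (mem_edgeSet _).mp (hF he)
  obtain ⟨hne, huv⟩ : u ≠ v ∧ ¬ G.Adj u v := ⟨hcompl.ne, fun h => hcompl.2 h⟩
  have hG'uv : (G ⊔ fromEdgeSet F).Adj u v := adj_sup_iff.mpr (Or.inr ⟨he, hne⟩)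
  have nonedge' : ∀ {p q : V}, ¬ G.Adj p q → p ∉ Fend F → ¬ (G ⊔ fromEdgeSet F).Adj p q := by
    intro p q h hp hadj
    rcases adj_sup_iff.mp hadj with h' | ⟨hm, _⟩
    · exact h h'
    · exact hp ⟨q, hm⟩
  have hsx := side huv hx hx1
  have hsy := side (fun h => huv h.symm) hy hy1
  rcases hsx with ⟨hux, hvx⟩ | ⟨hux, hvx, c, huc, hvc, hxc, hxnc⟩ <;>
    rcases hsy with ⟨hvy, huy⟩ | ⟨hvy, huy, d, hvd, hud, hyd, hynd⟩
  · -- x tip at u, y tip at v : P4  x-u-v-y in G'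
    refine hfree x u v y ⟨?_, ?_, ?_, ?_, hG'uv, ?_, ?_, ?_⟩
    · intro h; subst h; exact huv hux
    · intro h; subst h; exact huv hvy.symm
    · intro h; subst h; exact huy hux
    · exact adj_sup_iff.mpr (Or.inl hux.symm)
    · exact adj_sup_iff.mpr (Or.inl hvy)
    · exact nonedge' (fun h => hvx h.symm) hx2
    · intro h; exact nonedge' (fun hh => huy hh.symm) hy2 h.symm
  · -- x tip at u, y dominating middle with partner d : P4  d-v-y-x in G'
    have hdomy := dom (fun h => huv h.symm) hne.symm hvy huy hy1
    have hyx : G.Adj y x := hdomy x hux (by intro h; subst h; exact hvx hvy)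
    refine hfree d v y x ⟨?_, ?_, ?_, ?_, ?_, ?_, ?_, ?_⟩
    · exact hynd.symm
    · intro h; subst h; exact huv hux
    · intro h; subst h; exact hvx hvd
    · exact adj_sup_iff.mpr (Or.inl hvd.symm)
    · exact adj_sup_iff.mpr (Or.inl hvy)
    · exact adj_sup_iff.mpr (Or.inl hyx)
    · intro h; exact nonedge' hyd hy2 h.symm
    · intro h; exact nonedge' (fun hh => hvx hh.symm) hx2 h.symm
  · -- x dominating middle with partner c, y tip at v : P4  c-u-x-y in G'
    have hdomx := dom huv hne hux hvx hx1
    have hxy : G.Adj x y := hdomx y hvy (by intro h; subst h; exact huy hux)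
    refine hfree c u x y ⟨?_, ?_, ?_, ?_, ?_, ?_, ?_, ?_⟩
    · exact hxnc.symm
    · intro h; subst h; exact huv hvy.symm
    · intro h; subst h; exact huy huc
    · exact adj_sup_iff.mpr (Or.inl huc.symm)
    · exact adj_sup_iff.mpr (Or.inl hux)
    · exact adj_sup_iff.mpr (Or.inl hxy)
    · intro h; exact nonedge' hxc hx2 h.symm
    · intro h; exact nonedge' (fun hh => huy hh.symm) hy2 h.symm
  · -- both dominating middles : P4  c-y-x-d in G'
    have hdomx := dom huv hne hux hvx hx1
    have hdomy := dom (fun h => huv h.symm) hne.symm hvy huy hy1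
    have hxd : G.Adj x d := hdomx d hvd (by intro h; subst h; exact hud hux)
    have hyc : G.Adj y c := hdomy c huc (by intro h; subst h; exact hvc hvy)
    have hyx : G.Adj y x := hdomy x hux (by intro h; subst h; exact hx1 hy)
    refine hfree c y x d ⟨?_, ?_, ?_, ?_, ?_, ?_, ?_, ?_⟩
    · exact hxnc.symm
    · exact hynd
    · intro h; subst h; exact hud huc
    · exact adj_sup_iff.mpr (Or.inl hyc.symm)
    · exact adj_sup_iff.mpr (Or.inl hyx)
    · exact adj_sup_iff.mpr (Or.inl hxd)
    · intro h; exact nonedge' hxc hx2 h.symm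
    · exact nonedge' hyd hy2

lemma choose_good {G : SimpleGraph V} {F : Set (Sym2 V)} (hF : F ⊆ Gᶜ.edgeSet)
    (hfree : ∀ x y z t : V, ¬ PathObstruction (G ⊔ fromEdgeSet F) x y z t)
    {u v : V} (he : s(u, v) ∈ F) :
    (pts G v u ⊆ pts G u v ∪ Fend F) ∨ (pts G u v ⊆ pts G v u ∪ Fend F) := by
  by_contra hcon
  push_neg at hcon
  obtain ⟨x, hx, hx'⟩ := Set.not_subset.mp hcon.1
  obtain ⟨y, hy, hy'⟩ := Set.not_subset.mp hcon.2
  simp only [Set.mem_union, not_or] at hx' hy'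
  exact noCross hF hfree he hx hx'.1 hx'.2 hy hy'.1 hy'.2


lemma ncard_biUnion_le {α β : Type*} [Finite β] {s : Set α} (hs : s.Finite)
    (f : α → Set β) {m : ℕ} (h : ∀ a ∈ s, (f a).ncard ≤ m) :
    (⋃ a ∈ s, f a).ncard ≤ s.ncard * m := by
  refine Set.Finite.induction_on
    (motive := fun s _ => (∀ a ∈ s, (f a).ncard ≤ m) → (⋃ a ∈ s, f a).ncard ≤ s.ncard * m)
    s hs (by simp) ?_ h
  intro a t ha htf IH hm
  rw [Set.biUnion_insert, Set.ncard_insert_of_notMem ha htf, Nat.succ_mul]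
  calc ((f a) ∪ ⋃ x ∈ t, f x).ncard ≤ (f a).ncard + (⋃ x ∈ t, f x).ncard :=
        Set.ncard_union_le _ _
    _ ≤ m + t.ncard * m := Nat.add_le_add (hm a (Set.mem_insert _ _))
        (IH fun x hx => hm x (Set.mem_insert_of_mem _ hx))
    _ = t.ncard * m + m := Nat.add_comm _ _

lemma sym2_mem_ncard {β : Type*} (p : Sym2 β) : {x | x ∈ p}.ncard ≤ 2 := by
  refine Sym2.inductionOn p ?_
  intro a b
  have h2 : {x | x ∈ s(a, b)} = ({a, b} : Set β) := by
    ext x; simp [Sym2.mem_iff]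
  rw [h2]
  calc (insert a {b} : Set β).ncard ≤ ({b} : Set β).ncard + 1 := Set.ncard_insert_le _ _
    _ = 2 := by rw [Set.ncard_singleton]

lemma pts_eq (G : SimpleGraph V) (u v : V) :
    pts G u v = ⋃ p ∈ {p : Sym2 V | ∃ a b, PathObstruction G u a v b ∧ p = s(a, b)},
      {x | x ∈ p} := by
  ext x
  simp only [Set.mem_iUnion, Set.mem_setOf_eq, pts]
  constructor
  · rintro ⟨a, b, hPO, h⟩
    exact ⟨s(a, b), ⟨a, b, hPO, rfl⟩, Sym2.mem_iff.mpr h⟩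
  · rintro ⟨p, ⟨a, b, hPO, rfl⟩, hxp⟩
    exact ⟨a, b, hPO, Sym2.mem_iff.mp hxp⟩

lemma Fend_eq (F : Set (Sym2 V)) : Fend F = ⋃ e ∈ F, {x | x ∈ e} := by
  ext x
  simp only [Set.mem_iUnion, Set.mem_setOf_eq, Fend]
  constructor
  · rintro ⟨y, hy⟩
    exact ⟨s(x, y), hy, Sym2.mem_mk_left _ _⟩
  · rintro ⟨e, he, hxe⟩
    obtain ⟨y, rfl⟩ := Sym2.mem_iff_exists.mp hxe
    exact ⟨y, he⟩

end ModAux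


open ModAux

/-- If every non-adjacent pair `(u, v)` of `G` is a diagonal of at most `k`
obstructions, and there is a set `F` of at most `k` non-edges whose addition makes `G`
`(P₄, C₄)`-free, then the set `X(G)` of vertices lying in at least one induced `P₄` or
`C₄` has at most `2k² + 2k` elements. -/
theorem modulator_quadratic_bound {V : Type*} [Fintype V] (G : SimpleGraph V) (k : ℕ)
    (hdiag : ∀ u v : V,
      {p : Sym2 V | ∃ a b, PathObstruction G u a v b ∧ p = s(a, b)}.ncard ≤ k)
    (F : Set (Sym2 V)) (hF : F ⊆ Gᶜ.edgeSet) (hk : F.ncard ≤ k)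
    (hfree : ∀ x y z t : V, ¬ PathObstruction (G ⊔ SimpleGraph.fromEdgeSet F) x y z t) :
    {x : V | ∃ u a v b, PathObstruction G u a v b ∧
      x ∈ ({u, a, v, b} : Set V)}.ncard ≤ 2 * k ^ 2 + 2 * k := by
  classical
  cases isEmpty_or_nonempty V with
  | inl hV =>
    have : {x : V | ∃ u a v b, PathObstruction G u a v b ∧
        x ∈ ({u, a, v, b} : Set V)} = ∅ := Set.eq_empty_of_isEmpty _
    rw [this, Set.ncard_empty]
    exact Nat.zero_le _
  | inr hV =>
  have hptsle : ∀ u v : V, (pts G u v).ncard ≤ k * 2 := by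
    intro u v
    rw [pts_eq]
    calc _ ≤ ({p : Sym2 V | ∃ a b, PathObstruction G u a v b ∧ p = s(a, b)}).ncard * 2 :=
          ncard_biUnion_le (Set.toFinite _) _ (fun p _ => sym2_mem_ncard p)
      _ ≤ k * 2 := Nat.mul_le_mul_right 2 (hdiag u v)
  have hchoice : ∀ e ∈ F, ∃ p : V × V, e = s(p.1, p.2) ∧
      pts G p.2 p.1 ⊆ pts G p.1 p.2 ∪ Fend F := by
    intro e he
    refine Sym2.inductionOn (f := fun e => e ∈ F → ∃ p : V × V, e = s(p.1, p.2) ∧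
      pts G p.2 p.1 ⊆ pts G p.1 p.2 ∪ Fend F) e ?_ he
    intro u v he'
    rcases choose_good hF hfree he' with hg | hg
    · exact ⟨(u, v), rfl, hg⟩
    · exact ⟨(v, u), Sym2.eq_swap, hg⟩
  choose! g hg1 hg2 using hchoice
  set cover : Set V := Fend F ∪ ⋃ e ∈ F, pts G (g e).1 (g e).2 with hcover
  have orient : ∀ (u v x : V), s(u, v) ∈ F → x ∈ pts G u v → x ∈ cover := by
    intro u v x he hx
    rcases Sym2.eq_iff.mp (hg1 _ he) with ⟨h2, h3⟩ | ⟨h2, h3⟩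
    · refine Or.inr (Set.mem_biUnion he ?_)
      rw [← h2, ← h3]; exact hx
    · have hx' : x ∈ pts G (g s(u, v)).2 (g s(u, v)).1 := by rw [← h2, ← h3]; exact hx
      rcases hg2 _ he hx' with h | h
      · exact Or.inr (Set.mem_biUnion he h)
      · exact Or.inl h
  have key : ∀ (u a v b x : V), PathObstruction G u a v b → s(u, v) ∈ F →
      (x = u ∨ x = a ∨ x = v ∨ x = b) → x ∈ cover := by
    intro u a v b x hPO he hx
    rcases hx with rfl | rfl | rfl | rfl
    · exact Or.inl ⟨v, he⟩
    · exact orient u v x he ⟨x, b, hPO, Or.inl rfl⟩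
    · exact Or.inl ⟨u, by rwa [Sym2.eq_swap]⟩
    · exact orient u v x he ⟨a, x, hPO, Or.inr rfl⟩
  have hXsub : {x : V | ∃ u a v b, PathObstruction G u a v b ∧
      x ∈ ({u, a, v, b} : Set V)} ⊆ cover := by
    rintro x ⟨u, a, v, b, hPO, hx⟩
    simp only [Set.mem_insert_iff, Set.mem_singleton_iff] at hx
    rcases ModAux.persist hfree hPO with he | he
    · exact key u a v b x hPO he hx
    · refine key b v a u x (ModAux.flip hPO) (by rwa [Sym2.eq_swap]) ?_
      tauto
  calc {x : V | ∃ u a v b, PathObstruction G u a v b ∧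
      x ∈ ({u, a, v, b} : Set V)}.ncard ≤ cover.ncard :=
        Set.ncard_le_ncard hXsub (Set.toFinite _)
    _ ≤ (Fend F).ncard + (⋃ e ∈ F, pts G (g e).1 (g e).2).ncard := Set.ncard_union_le _ _
    _ ≤ F.ncard * 2 + F.ncard * (k * 2) := by
        refine Nat.add_le_add ?_ ?_
        · rw [Fend_eq]
          exact ncard_biUnion_le (Set.toFinite _) _ (fun e _ => sym2_mem_ncard e)
        · exact ncard_biUnion_le (Set.toFinite _) _ (fun e _ => hptsle _ _)
    _ ≤ k * 2 + k * (k * 2) := Nat.add_le_add (Nat.mul_le_mul_right 2 hk)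
        (Nat.mul_le_mul_right (k * 2) hk)
    _ = 2 * k ^ 2 + 2 * k := by ring
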